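/- Lower bound on certificate size: there is a family of strongly connected graphs with n vertices and k Streett pairs (L_j, U_j) with L_j = {s} and U_j = {v_j} for distinct vertices v_1,...,v_k, where the only path between two distinguished vertices s and t has length Θ(n), such that every infinite path satisfying all Streett pairs and visiting s infinitely often has every cycle through s of length at least n/2, and hence any lasso-shaped certificate (a finite path followed by a repeated cycle covering one vertex from each U_j with L_j intersected) has size at least Ω(n · k). -/

import Mathlib

/-- The edge relation of the certificate lower-bound family: a simple directed path
`s = p_0 → p_1 → ... → p_L = t` (the vertices `Sum.inl i`), an edge from `t` to each
`v_j` (the vertices `Sum.inr j`), and an edge from each `v_j` back to `s`. -/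
def pathE (L k : ℕ) : (Fin (L + 1) ⊕ Fin k) → (Fin (L + 1) ⊕ Fin k) → Prop :=
  fun a b =>
    match a, b with
    | .inl i, .inl j => (j : ℕ) = (i : ℕ) + 1
    | .inl i, .inr _ => (i : ℕ) = L
    | .inr _, .inl j => (j : ℕ) = 0
    | .inr _, .inr _ => False

/-- Backward propagation: any visit to `Sum.inr j` at time `b ≤ len` must be preceded
by the entire simple path: `f (b-1-m) = Sum.inl (L-m)` for all `m ≤ L`. -/
lemma stmt16_key (L k len : ℕ)
    (f : ℕ → Fin (L + 1) ⊕ Fin k)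
    (hwalk : ∀ i < len, pathE L k (f i) (f (i + 1)))
    (h0 : f 0 = Sum.inl 0) (hend : f len = Sum.inl 0)
    (b : ℕ) (j : Fin k) (hb : b ≤ len) (hfb : f b = Sum.inr j) :
    ∀ m ≤ L, m + 1 ≤ b ∧ f (b - 1 - m) = Sum.inl ⟨L - m, by omega⟩ := by
  have hblen : b < len := by
    rcases Nat.lt_or_ge b len with h | h
    · exact h
    · exfalso
      have : b = len := le_antisymm hb h
      rw [this, hend] at hfb
      exact Sum.inl_ne_inr hfb
  intro m hm
  induction m with
  | zero =>
    have hb1 : 1 ≤ b := by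
      rcases Nat.eq_zero_or_pos b with h | h
      · exfalso; rw [h, h0] at hfb; exact Sum.inl_ne_inr hfb
      · exact h
    have hw := hwalk (b - 1) (by omega)
    have hsucc : b - 1 + 1 = b := by omega
    rw [hsucc, hfb] at hw
    refine ⟨hb1, ?_⟩
    rcases h : f (b - 1) with i | j'
    · rw [h] at hw
      simp only [pathE] at hw
      congr 1
      refine Fin.ext ?_
      show (i : ℕ) = L - 0
      omega
    · rw [h] at hw
      simp only [pathE] at hw
  | succ m ih =>
    have hmL : m ≤ L := by omega
    obtain ⟨hb2, hfprev⟩ := ih hmL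
    -- f (b - 1 - m) = inl (L - m), with L - m ≥ 1 since m < L
    have hLm : 1 ≤ L - m := by omega
    have hne0 : b - 1 - m ≠ 0 := by
      intro h
      rw [h, h0] at hfprev
      have := Sum.inl.inj hfprev
      have : (⟨L - m, by omega⟩ : Fin (L + 1)) = 0 := this.symm
      have := congrArg Fin.val this
      simp at this
      omega
    have hb3 : m + 2 ≤ b := by omega
    have hw := hwalk (b - 2 - m) (by omega)
    have hsucc : b - 2 - m + 1 = b - 1 - m := by omega
    rw [hsucc, hfprev] at hw
    refine ⟨by omega, ?_⟩
    have heq : b - 1 - (m + 1) = b - 2 - m := by omega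
    rw [heq]
    rcases h : f (b - 2 - m) with i | j'
    · rw [h] at hw
      simp only [pathE] at hw
      congr 1
      exact Fin.ext (by simp at hw ⊢; omega)
    · rw [h] at hw
      simp only [pathE] at hw
      omega

/-- lower bound on certificate size, formalizable version: in the graph
above (with Streett pairs `L_j = {s}`, `U_j = {v_j}`), any closed walk starting and
ending at `s` that visits all of `v_1, …, v_k` has length at least `k · L`
(where `L = Θ(n)` is the length of the only `s`–`t` path). Hence any lasso-shaped
certificate has size `Ω(n · k)`. -/
theorem stmt16 (L k len : ℕ) (hL : 1 ≤ L)
    (f : ℕ → Fin (L + 1) ⊕ Fin k)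
    (hwalk : ∀ i < len, pathE L k (f i) (f (i + 1)))
    (h0 : f 0 = Sum.inl 0) (hend : f len = Sum.inl 0)
    (hall : ∀ j : Fin k, ∃ i ≤ len, f i = Sum.inr j) :
    k * L ≤ len := by
  -- choose a visit time for each j
  choose t ht hft using hall
  have key := stmt16_key L k len f hwalk h0 hend
  -- each t j ≥ L + 1
  have htL : ∀ j, L + 1 ≤ t j := fun j => (key (t j) j (ht j) (hft j) L le_rfl).1
  have hwin : ∀ j, ∀ m ≤ L, f (t j - 1 - m) = Sum.inl ⟨L - m, by omega⟩ :=
    fun j m hm => (key (t j) j (ht j) (hft j) m hm).2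
  -- no other t j' lies in the window [t j - 1 - L, t j - 1]
  have hsep : ∀ j j' : Fin k, t j < t j' → t j + L + 2 ≤ t j' := by
    intro j j' hlt
    by_contra h
    push_neg at h
    have hm : t j' - 1 - (t j' - 1 - t j) = t j := by omega
    have := hwin j' (t j' - 1 - t j) (by omega)
    rw [hm, hft j] at this
    exact Sum.inl_ne_inr this.symm
  -- injection from Fin k × Fin (L+1) into Fin len
  have hinj : Function.Injective (fun p : Fin k × Fin (L + 1) =>
      (⟨t p.1 - 1 - (p.2 : ℕ), by
        have h1 := htL p.1
        have h2 := ht p.1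
        have h3 : t p.1 < len := by
          rcases lt_or_eq_of_le h2 with h | h
          · exact h
          · exfalso
            have hc := hft p.1
            rw [h, hend] at hc
            exact Sum.inl_ne_inr hc
        omega⟩ : Fin len)) := by
    intro ⟨j, m⟩ ⟨j', m'⟩ hpe
    simp only [Fin.mk.injEq] at hpe
    have hm : (m : ℕ) ≤ L := by omega
    have hm' : (m' : ℕ) ≤ L := by omega
    by_cases hjj : j = j'
    · subst hjj
      have := htL j
      have : (m : ℕ) = (m' : ℕ) := by omega
      exact Prod.ext rfl (Fin.ext this)
    · exfalso
      have hne : t j ≠ t j' := by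
        intro h
        apply hjj
        have := hft j
        rw [h, hft j'] at this
        exact (Sum.inr.inj this).symm
      rcases Nat.lt_or_ge (t j) (t j') with hlt | hge
      · have := hsep j j' hlt
        have := htL j
        omega
      · have hlt : t j' < t j := by omega
        have := hsep j' j hlt
        have := htL j'
        omega
  have hcard := Fintype.card_le_of_injective _ hinj
  simp [Fintype.card_prod] at hcard
  nlinarith
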